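/- Any countable graph satisfying the extension property is isomorphic to the Rado graph: if G and H are countable graphs such that for any disjoint finite vertex sets A, B in either graph there is a vertex joined to all of A and none of B, then G ≅ H. -/

import Mathlib

/-- The extension property characterizing the Rado graph. -/
def ExtensionProperty {V : Type*} (G : SimpleGraph V) : Prop :=
  ∀ A B : Finset V, Disjoint A B →
    ∃ v : V, v ∉ A ∧ v ∉ B ∧ (∀ a ∈ A, G.Adj v a) ∧ (∀ b ∈ B, ¬ G.Adj v b)

open FirstOrder Language FirstOrder.Language.Substructure

instance : IsEmpty (Language.graph.Relations 0) := ⟨fun r => by cases r⟩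

lemma rado_extPair {V W : Type*} (G : SimpleGraph V) (H : SimpleGraph W)
    (hH : ExtensionProperty H) :
    @Language.IsExtensionPair Language.graph V W G.structure H.structure := by
  letI := G.structure
  letI := H.structure
  rintro ⟨f, f_fg⟩ m
  by_cases hm : m ∈ f.dom
  · exact ⟨⟨f, f_fg⟩, hm, le_refl _⟩
  classical
  have hfin : Finite f.dom := f_fg.finite
  have hcod_fg : f.cod.FG := f.dom_fg_iff_cod_fg.1 f_fg
  have hcfin : Finite f.cod := hcod_fg.finite
  set F : f.dom → W := fun a => (f.toEquiv a : W) with hF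
  have hFinj : Function.Injective F := fun a b hab =>
    f.toEquiv.injective (Subtype.ext hab)
  have hFmem : ∀ a, F a ∈ f.cod := fun a => (f.toEquiv a).2
  have hFsurj : ∀ y ∈ f.cod, ∃ a, F a = y := by
    intro y hy
    exact ⟨f.toEquiv.symm ⟨y, hy⟩, congrArg Subtype.val (f.toEquiv.apply_symm_apply ⟨y, hy⟩)⟩
  set A : Set W := F '' {a | G.Adj m ↑a} with hA
  set B : Set W := F '' {a | ¬ G.Adj m ↑a} with hB
  have hAfin : A.Finite := Set.toFinite _
  have hBfin : B.Finite := Set.toFinite _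
  have hdisj : Disjoint hAfin.toFinset hBfin.toFinset := by
    simp only [Finset.disjoint_left, Set.Finite.mem_toFinset]
    rintro x ⟨a, ha, rfl⟩ ⟨b, hb, hab⟩
    exact hb (hFinj hab ▸ ha)
  obtain ⟨w, hwA, hwB, hadjA, hnadjB⟩ := hH hAfin.toFinset hBfin.toFinset hdisj
  have hwT : w ∉ f.cod := by
    intro hw
    obtain ⟨a, rfl⟩ := hFsurj w hw
    by_cases ha : G.Adj m ↑a
    · exact hwA (hAfin.mem_toFinset.2 ⟨a, ha, rfl⟩)
    · exact hwB (hBfin.mem_toFinset.2 ⟨a, ha, rfl⟩)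
  -- new domain and codomain
  set domS : Language.graph.Substructure V := closure _ (↑f.dom ∪ {m}) with hdomS
  set codS : Language.graph.Substructure W := closure _ (↑f.cod ∪ {w}) with hcodS
  have hdom_mem : ∀ x : V, x ∈ domS ↔ x ∈ f.dom ∨ x = m := by
    intro x
    rw [hdomS, mem_closure_iff_of_isRelational]
    simp [SetLike.mem_coe, or_comm]
  have hcod_mem : ∀ y : W, y ∈ codS ↔ y ∈ f.cod ∨ y = w := by
    intro y
    rw [hcodS, mem_closure_iff_of_isRelational]
    simp [SetLike.mem_coe, or_comm]
  have hmdom : m ∈ domS := (hdom_mem m).2 (Or.inr rfl)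
  have hwcod : w ∈ codS := (hcod_mem w).2 (Or.inr rfl)
  have hdomle : f.dom ≤ domS := fun x hx => (hdom_mem x).2 (Or.inl hx)
  have hcodle : f.cod ≤ codS := fun y hy => (hcod_mem y).2 (Or.inl hy)
  -- underlying bijection
  set toF : domS → codS := fun x =>
    if h : (x : V) ∈ f.dom then ⟨F ⟨x, h⟩, hcodle (hFmem _)⟩ else ⟨w, hwcod⟩ with htoF
  set invF : codS → domS := fun y =>
    if h : (y : W) ∈ f.cod then ⟨(f.toEquiv.symm ⟨y, h⟩ : V), hdomle (f.toEquiv.symm ⟨y, h⟩).2⟩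
    else ⟨m, hmdom⟩ with hinvF
  have hval_ne : ∀ x : domS, (x : V) ∉ f.dom → (x : V) = m := by
    intro x hx
    rcases (hdom_mem x).1 x.2 with h | h
    · exact absurd h hx
    · exact h
  have hcval_ne : ∀ y : codS, (y : W) ∉ f.cod → (y : W) = w := by
    intro y hy
    rcases (hcod_mem y).1 y.2 with h | h
    · exact absurd h hy
    · exact h
  have hleft : Function.LeftInverse invF toF := by
    intro x
    by_cases h : (x : V) ∈ f.dom
    · apply Subtype.ext
      simp only [htoF, hinvF, dif_pos h, dif_pos (hFmem ⟨(x : V), h⟩)]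
      have : f.toEquiv.symm ⟨F ⟨(x : V), h⟩, hFmem _⟩ = ⟨(x : V), h⟩ := by
        apply f.toEquiv.injective
        rw [f.toEquiv.apply_symm_apply]
      rw [this]
    · apply Subtype.ext
      simp only [htoF, hinvF, dif_pos, dif_neg h, dif_neg hwT]
      exact (hval_ne x h).symm
  have hright : Function.RightInverse invF toF := by
    intro y
    by_cases h : (y : W) ∈ f.cod
    · apply Subtype.ext
      simp only [htoF, hinvF, dif_pos h, dif_pos (f.toEquiv.symm ⟨(y : W), h⟩).2]
      simp only [hF]
      rw [Subtype.coe_eta, f.toEquiv.apply_symm_apply]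
    · apply Subtype.ext
      simp only [htoF, hinvF, dif_neg h, dif_neg hm]
      exact (hcval_ne y h).symm
  set e : domS ≃ codS := ⟨toF, invF, hleft, hright⟩ with he
  -- adjacency preservation
  have hadj' : ∀ a : f.dom, H.Adj w (F a) ↔ G.Adj m ↑a := by
    intro a
    constructor
    · intro hw
      by_contra ha
      exact hnadjB _ (hBfin.mem_toFinset.2 ⟨a, ha, rfl⟩) hw
    · intro ha
      exact hadjA _ (hAfin.mem_toFinset.2 ⟨a, ha, rfl⟩)
  have key : ∀ x y : domS, H.Adj ↑(toF x) ↑(toF y) ↔ G.Adj ↑x ↑y := by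
    intro x y
    by_cases hx : (x : V) ∈ f.dom <;> by_cases hy : (y : V) ∈ f.dom
    · simp only [htoF, dif_pos hx, dif_pos hy]
      exact f.toEquiv.map_rel' Language.adj ![⟨(x : V), hx⟩, ⟨(y : V), hy⟩]
    · simp only [htoF, dif_pos hx, dif_neg hy]
      rw [hval_ne y hy, H.adj_comm, G.adj_comm]
      exact hadj' ⟨(x : V), hx⟩
    · simp only [htoF, dif_neg hx, dif_pos hy]
      rw [hval_ne x hx]
      exact hadj' ⟨(y : V), hy⟩
    · simp only [htoF, dif_neg hx, dif_neg hy]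
      rw [hval_ne x hx, hval_ne y hy]
      simp [SimpleGraph.irrefl]
  set E : domS ≃[Language.graph] codS :=
    { e with
      map_fun' := fun {n} fn => isEmptyElim fn
      map_rel' := by
        intro n r x
        cases r
        exact key (x 0) (x 1) } with hE
  refine ⟨⟨⟨domS, codS, E⟩, ?_⟩, hmdom, ?_⟩
  · have hcar : (domS : Set V) = ↑f.dom ∪ {m} := by
      rw [hdomS]; exact closure_eq_of_isRelational _ _
    have hfin2 : ((domS : Set V)).Finite := by
      rw [hcar]
      exact (Set.finite_coe_iff.1 hfin).union (Set.finite_singleton m)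
    exact Substructure.fg_iff_finite.2 hfin2.to_subtype
  · rw [Subtype.mk_le_mk, PartialEquiv.le_iff]
    refine ⟨hdomle, hcodle, fun x => ?_⟩
    apply Subtype.ext
    show (f.toEquiv x : W) = ↑(toF ⟨(x : V), hdomle x.2⟩)
    simp only [htoF, dif_pos x.2]
    rfl

/-- Back-and-forth uniqueness of the Rado graph: any two countable graphs with
the extension property are isomorphic. -/
theorem rado_unique {V W : Type*} [Countable V] [Countable W]
    (G : SimpleGraph V) (H : SimpleGraph W)
    (hG : ExtensionProperty G) (hH : ExtensionProperty H) :
    Nonempty (G ≃g H) := by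
  letI := G.structure
  letI := H.structure
  obtain ⟨φ, -⟩ := equiv_between_cg Structure.cg_of_countable Structure.cg_of_countable
    default (rado_extPair G H hH) (rado_extPair H G hG)
  exact ⟨⟨φ.toEquiv, fun {a b} => φ.map_rel' Language.adj ![a, b]⟩⟩
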